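/- If V is a proximal subgradient of f∘λ at X (f lsc, symmetric, lower-bounded, λ(X) in the domain of f), then there exists α > 0 with X ∈ P_α(f∘λ)(X + αV), and consequently X and V commute. -/

import Mathlib

open Matrix

/-- The vector of eigenvalues of a symmetric matrix, listed in nonincreasing order
(junk value `0` for non-Hermitian matrices). -/
noncomputable def eigd {n : ℕ} (X : Matrix (Fin n) (Fin n) ℝ) : Fin n → ℝ :=
  if h : X.IsHermitian then
    fun i => h.eigenvalues (Tuple.sort h.eigenvalues i.rev)
  else 0

/-- A function on `ℝⁿ` is symmetric if it is invariant under coordinate permutations. -/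
def IsSymmFn {n : ℕ} (f : (Fin n → ℝ) → EReal) : Prop :=
  ∀ (π : Equiv.Perm (Fin n)) (x : Fin n → ℝ), f (fun i => x (π i)) = f x

/-- Moreau envelope on `ℝⁿ` (Euclidean norm). -/
noncomputable def mEnvV {n : ℕ} (f : (Fin n → ℝ) → EReal) (α : ℝ) (x : Fin n → ℝ) : EReal :=
  ⨅ y : Fin n → ℝ, f y + (((∑ i, (y i - x i) ^ 2) / (2 * α) : ℝ) : EReal)

/-- Proximal mapping on `ℝⁿ` (Euclidean norm). -/
def proxV {n : ℕ} (f : (Fin n → ℝ) → EReal) (α : ℝ) (x : Fin n → ℝ) : Set (Fin n → ℝ) :=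
  {y | ∀ z, f y + (((∑ i, (y i - x i) ^ 2) / (2 * α) : ℝ) : EReal)
      ≤ f z + (((∑ i, (z i - x i) ^ 2) / (2 * α) : ℝ) : EReal)}

/-- Moreau envelope of the spectral function `f ∘ λ` on the space of symmetric
matrices, with respect to the Frobenius norm. -/
noncomputable def mEnvS {n : ℕ} (f : (Fin n → ℝ) → EReal) (α : ℝ)
    (X : Matrix (Fin n) (Fin n) ℝ) : EReal :=
  ⨅ Y : {Y : Matrix (Fin n) (Fin n) ℝ // Y.IsHermitian},
    f (eigd Y.1) + (((((Y.1 - X)ᵀ * (Y.1 - X)).trace) / (2 * α) : ℝ) : EReal)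

/-- Proximal mapping of the spectral function `f ∘ λ` on the space of symmetric
matrices, with respect to the Frobenius norm. -/
def proxS {n : ℕ} (f : (Fin n → ℝ) → EReal) (α : ℝ)
    (X : Matrix (Fin n) (Fin n) ℝ) : Set (Matrix (Fin n) (Fin n) ℝ) :=
  {Y | Y.IsHermitian ∧ ∀ Z : Matrix (Fin n) (Fin n) ℝ, Z.IsHermitian →
    f (eigd Y) + ((((Y - X)ᵀ * (Y - X)).trace / (2 * α) : ℝ) : EReal)
      ≤ f (eigd Z) + ((((Z - X)ᵀ * (Z - X)).trace / (2 * α) : ℝ) : EReal)}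

/-- `V` is a proximal subgradient of `F` (a function on symmetric matrices) at the
symmetric matrix `X`: for some `r, ε > 0`,
`F(Y) ≥ F(X) + ⟨V, Y−X⟩ − (r/2)‖Y−X‖²` for all symmetric `Y` with `‖Y−X‖ ≤ ε`. -/
def ProxSubM {n : ℕ} (F : Matrix (Fin n) (Fin n) ℝ → EReal)
    (X V : Matrix (Fin n) (Fin n) ℝ) : Prop :=
  ∃ r ε : ℝ, 0 < r ∧ 0 < ε ∧ ∀ Y : Matrix (Fin n) (Fin n) ℝ, Y.IsHermitian →
    Real.sqrt (((Y - X)ᵀ * (Y - X)).trace) ≤ ε →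
    F X + (((V * (Y - X)).trace - r / 2 * ((Y - X)ᵀ * (Y - X)).trace : ℝ) : EReal)
      ≤ F Y


set_option maxHeartbeats 1600000

namespace Stmt14

open Polynomial

variable {n : ℕ}

/-- squared Frobenius norm -/
noncomputable def ns (A : Matrix (Fin n) (Fin n) ℝ) : ℝ := (Aᵀ * A).trace

lemma trace_tmul (A B : Matrix (Fin n) (Fin n) ℝ) :
    (Aᵀ * B).trace = ∑ i, ∑ j, A j i * B j i := by
  simp [Matrix.trace, Matrix.mul_apply, Matrix.diag, Matrix.transpose_apply]

lemma ns_eq_sum (A : Matrix (Fin n) (Fin n) ℝ) : ns A = ∑ i, ∑ j, A j i * A j i := trace_tmul A A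

lemma ns_nonneg (A : Matrix (Fin n) (Fin n) ℝ) : 0 ≤ ns A := by
  rw [ns_eq_sum]
  exact Finset.sum_nonneg fun i _ => Finset.sum_nonneg fun j _ => mul_self_nonneg _

lemma eq_zero_of_ns (A : Matrix (Fin n) (Fin n) ℝ) (h : ns A = 0) : A = 0 := by
  rw [ns_eq_sum] at h
  ext i j
  have h1 := (Finset.sum_eq_zero_iff_of_nonneg
    (fun i _ => Finset.sum_nonneg fun j _ => mul_self_nonneg (A j i))).mp h j (Finset.mem_univ _)
  have h2 := (Finset.sum_eq_zero_iff_of_nonneg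
    (fun k _ => mul_self_nonneg (A k j))).mp h1 i (Finset.mem_univ _)
  simpa [mul_self_eq_zero] using h2

lemma ns_sub (A B : Matrix (Fin n) (Fin n) ℝ) :
    ns (A - B) = ns A - 2 * (Aᵀ * B).trace + ns B := by
  simp only [ns_eq_sum, trace_tmul, Matrix.sub_apply, Finset.mul_sum,
    ← Finset.sum_sub_distrib, ← Finset.sum_add_distrib]
  exact Finset.sum_congr rfl fun i _ => Finset.sum_congr rfl fun j _ => by ring

lemma ns_smul (c : ℝ) (A : Matrix (Fin n) (Fin n) ℝ) : ns (c • A) = c ^ 2 * ns A := by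
  simp only [ns_eq_sum, Matrix.smul_apply, smul_eq_mul, Finset.mul_sum]
  exact Finset.sum_congr rfl fun i _ => Finset.sum_congr rfl fun j _ => by ring

lemma ns_neg (A : Matrix (Fin n) (Fin n) ℝ) : ns (-A) = ns A := by
  simp only [ns_eq_sum, Matrix.neg_apply]
  exact Finset.sum_congr rfl fun i _ => Finset.sum_congr rfl fun j _ => by ring

lemma ns_zero : ns (0 : Matrix (Fin n) (Fin n) ℝ) = 0 := by
  simp [ns_eq_sum]

lemma tmul_smul (c : ℝ) (A B : Matrix (Fin n) (Fin n) ℝ) :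
    ((c • A)ᵀ * B).trace = c * (Aᵀ * B).trace := by
  simp only [trace_tmul, Matrix.smul_apply, smul_eq_mul, Finset.mul_sum]
  exact Finset.sum_congr rfl fun i _ => Finset.sum_congr rfl fun j _ => by ring

lemma ns_sub_half (A B : Matrix (Fin n) (Fin n) ℝ) :
    ns A / 2 - ns B ≤ ns (A - B) := by
  have h0 : 0 ≤ ns ((2:ℝ)⁻¹ • A - B) := ns_nonneg _
  rw [ns_sub, ns_smul, tmul_smul] at h0
  have := ns_sub A B
  nlinarith [this]

/-- transpose of a symmetric real matrix -/
lemma herm_tr {A : Matrix (Fin n) (Fin n) ℝ} (h : A.IsHermitian) : Aᵀ = A := by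
  ext i j
  simpa using congrFun (congrFun h i) j

lemma herm_of_tr {A : Matrix (Fin n) (Fin n) ℝ} (h : Aᵀ = A) : A.IsHermitian := by
  have : Aᴴ = Aᵀ := by ext i j; simp [Matrix.conjTranspose_apply]
  rw [Matrix.IsHermitian, this, h]

lemma charpoly_diag (d : Fin n → ℝ) :
    (Matrix.diagonal d).charpoly = ∏ i, (X - C (d i)) := by
  have h : charmatrix (Matrix.diagonal d) = Matrix.diagonal fun i => X - C (d i) := by
    ext i j
    by_cases hij : i = j
    · subst hij; simp
    · simp [charmatrix_apply_ne _ _ _ hij, Matrix.diagonal_apply_ne _ hij]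
  rw [Matrix.charpoly, h, Matrix.det_diagonal]

lemma charpoly_conj (Q Q' A : Matrix (Fin n) (Fin n) ℝ) (h : Q * Q' = 1) :
    (Q * A * Q').charpoly = A.charpoly := by
  have hmap1 : Q.map ⇑C * Q'.map ⇑C = 1 := by
    rw [← Matrix.map_mul, h, Matrix.map_one _ (map_zero C) (map_one C)]
  have hc : charmatrix (Q * A * Q') = Q.map ⇑C * charmatrix A * Q'.map ⇑C := by
    simp only [charmatrix]
    rw [Matrix.mul_sub, Matrix.sub_mul]
    congr 1
    · have comm : Matrix.scalar (Fin n) (X : ℝ[X]) * Q.map ⇑C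
          = Q.map ⇑C * Matrix.scalar (Fin n) (X : ℝ[X]) :=
        Matrix.scalar_commute (X : ℝ[X]) (fun r' => Commute.all _ _) (Q.map ⇑C)
      rw [← comm, Matrix.mul_assoc, hmap1, Matrix.mul_one]
    · simp only [RingHom.mapMatrix_apply]
      rw [Matrix.map_mul, Matrix.map_mul]
  rw [Matrix.charpoly, Matrix.charpoly, hc, Matrix.det_mul, Matrix.det_mul]
  have hdet : (Q.map ⇑C).det * (Q'.map ⇑C).det = 1 := by
    rw [← Matrix.det_mul, hmap1, Matrix.det_one]
  calc (Q.map ⇑C).det * (charmatrix A).det * (Q'.map ⇑C).det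
      = (charmatrix A).det * ((Q.map ⇑C).det * (Q'.map ⇑C).det) := by ring
    _ = (charmatrix A).det := by rw [hdet, mul_one]

lemma charpoly_herm (A : Matrix (Fin n) (Fin n) ℝ) (hA : A.IsHermitian) :
    A.charpoly = ∏ i, (X - C (hA.eigenvalues i)) := by
  have hst := hA.spectral_theorem
  set U : Matrix (Fin n) (Fin n) ℝ := (hA.eigenvectorUnitary : Matrix (Fin n) (Fin n) ℝ)
  have hU : U * star U = 1 := (Matrix.mem_unitaryGroup_iff).mp hA.eigenvectorUnitary.2
  have hD : Matrix.diagonal ((RCLike.ofReal : ℝ → ℝ) ∘ hA.eigenvalues)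
      = Matrix.diagonal hA.eigenvalues := by
    congr 1
  calc A.charpoly = (U * Matrix.diagonal hA.eigenvalues * star U).charpoly := by
        rw [← hD]; exact congrArg Matrix.charpoly hst
    _ = (Matrix.diagonal hA.eigenvalues).charpoly := charpoly_conj _ _ _ hU
    _ = ∏ i, (X - C (hA.eigenvalues i)) := charpoly_diag _

lemma eig_multiset_eq {A B : Matrix (Fin n) (Fin n) ℝ} (hA : A.IsHermitian)
    (hB : B.IsHermitian) (h : A.charpoly = B.charpoly) :
    Finset.univ.val.map hA.eigenvalues = Finset.univ.val.map hB.eigenvalues := by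
  have ha := charpoly_herm A hA
  have hb := charpoly_herm B hB
  have hmp : ((Finset.univ.val.map hA.eigenvalues).map (fun a => X - C a)).prod
      = ((Finset.univ.val.map hB.eigenvalues).map (fun a => X - C a)).prod := by
    rw [Multiset.map_map, Multiset.map_map]
    rw [← Finset.prod_eq_multiset_prod, ← Finset.prod_eq_multiset_prod]
    simpa [Function.comp] using ha.symm.trans (h.trans hb)
  have := congrArg Polynomial.roots hmp
  rwa [Polynomial.roots_multiset_prod_X_sub_C, Polynomial.roots_multiset_prod_X_sub_C] at this

lemma sort_comp_eq {a b : Fin n → ℝ}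
    (h : Finset.univ.val.map a = Finset.univ.val.map b) :
    a ∘ Tuple.sort a = b ∘ Tuple.sort b := by
  apply List.ofFn_injective
  have key : ∀ (c : Fin n → ℝ),
      Finset.univ.val.map (c ∘ ⇑(Tuple.sort c)) = Finset.univ.val.map c := by
    intro c
    have h1 : Finset.univ.val.map ⇑(Tuple.sort c) = Finset.univ.val := by
      have := congrArg Finset.val (Finset.map_univ_equiv (Tuple.sort c))
      simpa [Finset.map_val] using this
    rw [show (c ∘ ⇑(Tuple.sort c)) = fun i => c (Tuple.sort c i) from rfl]
    calc Finset.univ.val.map (fun i => c (Tuple.sort c i))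
        = (Finset.univ.val.map ⇑(Tuple.sort c)).map c := by
          rw [Multiset.map_map]; rfl
      _ = Finset.univ.val.map c := by rw [h1]
  refine (fun hp h1 h2 => List.Perm.eq_of_sortedLE h1 h2 hp) ?_ ?_ ?_
  · rw [← Multiset.coe_eq_coe, ← Fin.univ_val_map, ← Fin.univ_val_map]
    rw [key a, key b, h]
  · exact (Tuple.monotone_sort a).sortedLE_ofFn
  · exact (Tuple.monotone_sort b).sortedLE_ofFn

lemma eigd_eq_of_charpoly {A B : Matrix (Fin n) (Fin n) ℝ} (hA : A.IsHermitian)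
    (hB : B.IsHermitian) (h : A.charpoly = B.charpoly) : eigd A = eigd B := by
  have hs := sort_comp_eq (eig_multiset_eq hA hB h)
  funext i
  rw [eigd, eigd, dif_pos hA, dif_pos hB]
  exact congrFun hs i.rev

theorem part1 (f : (Fin n → ℝ) → EReal)
    (hbdd : ∃ c : ℝ, ∀ y, (c : EReal) ≤ f y)
    (X : Matrix (Fin n) (Fin n) ℝ) (hX : X.IsHermitian)
    (fx : ℝ) (hfx : f (eigd X) = (fx : EReal))
    (V : Matrix (Fin n) (Fin n) ℝ) (hVsymm : V.IsHermitian)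
    (hV : ProxSubM (fun M => f (eigd M)) X V) :
    ∃ α : ℝ, 0 < α ∧ α * ns V * 2⁻¹ * 2⁻¹ ≤ 1 ∧ X ∈ proxS f α (X + α • V) := by
  obtain ⟨c, hc⟩ := hbdd
  obtain ⟨r, ε, hr, hε, hloc⟩ := hV
  set K : ℝ := max (fx - c + ns V) 0 + 1 with hKdef
  have hK1 : (1:ℝ) ≤ K := by
    have : (0:ℝ) ≤ max (fx - c + ns V) 0 := le_max_right _ _
    simp only [hKdef]; linarith
  have hK0 : (0:ℝ) < K := lt_of_lt_of_le one_pos hK1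
  have hKfc : fx - c + ns V ≤ K := le_trans (le_max_left _ _) (by linarith)
  set α : ℝ := min (1/r) (min (1/(ns V + 1)) (ε^2/(4*K))) with hαdef
  have hα : 0 < α := by
    have h1 : 0 < 1/r := by positivity
    have h2 : 0 < 1/(ns V + 1) := by have := ns_nonneg V; positivity
    have h3 : 0 < ε^2/(4*K) := by positivity
    exact lt_min h1 (lt_min h2 h3)
  have hα1 : α * r ≤ 1 := by
    have : α ≤ 1/r := min_le_left _ _
    calc α * r ≤ (1/r) * r := by nlinarith
      _ = 1 := by field_simp
  have hα2 : α * (ns V + 1) ≤ 1 := by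
    have h2 : α ≤ 1/(ns V + 1) := le_trans (min_le_right _ _) (min_le_left _ _)
    have hp : (0:ℝ) < ns V + 1 := by have := ns_nonneg V; positivity
    calc α * (ns V + 1) ≤ (1/(ns V + 1)) * (ns V + 1) := by nlinarith
      _ = 1 := by field_simp
  have hα3 : 4 * α * K ≤ ε^2 := by
    have h3 : α ≤ ε^2/(4*K) := le_trans (min_le_right _ _) (min_le_right _ _)
    calc 4 * α * K ≤ 4 * (ε^2/(4*K)) * K := by nlinarith
      _ = ε^2 := by field_simp
  refine ⟨α, hα, ?_, hX, ?_⟩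
  · have := ns_nonneg V
    nlinarith
  intro Z hZ
  -- rewrite trace expressions via ns
  have hXc : X - (X + α • V) = -(α • V) := by abel
  have hZc : Z - (X + α • V) = (Z - X) - α • V := by abel
  have hq1 : ((X - (X + α • V))ᵀ * (X - (X + α • V))).trace / (2*α) = α * ns V / 2 := by
    have : ((X - (X + α • V))ᵀ * (X - (X + α • V))).trace = ns (X - (X + α • V)) := rfl
    rw [this, hXc, ns_neg, ns_smul]
    field_simp
  set u : ℝ := ns (Z - X) with hudef
  have hu0 : 0 ≤ u := ns_nonneg _
  set t : ℝ := (V * (Z - X)).trace with htdef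
  have hu' : ((Z - X)ᵀ * (Z - X)).trace = u := rfl
  have ht' : (V * (Z - X)).trace = t := rfl
  have hu2 : ns (Z - X) = u := rfl
  have hiptv : ((Z - X)ᵀ * (α • V)).trace = α * t := by
    rw [herm_tr (hZ.sub hX), Matrix.mul_smul, Matrix.trace_smul, htdef, Matrix.trace_mul_comm]
    rfl
  have hq2 : ((Z - (X + α • V))ᵀ * (Z - (X + α • V))).trace = u - 2*(α*t) + α^2 * ns V := by
    have : ((Z - (X + α • V))ᵀ * (Z - (X + α • V))).trace = ns (Z - (X + α • V)) := rfl
    rw [this, hZc, ns_sub, hiptv, ns_smul]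
  rw [hfx, hq1, hq2]
  have hq2'' : u - 2*(α*t) + α^2*ns V = ns ((Z - X) - α • V) := by
    rw [ns_sub, hiptv, ns_smul, hu2]
  clear_value K α u t
  by_cases hnear : Real.sqrt (((Z - X)ᵀ * (Z - X)).trace) ≤ ε
  · -- near case
    have h : (((fx + (t - r/2*u) : ℝ)) : EReal) ≤ f (eigd Z) := by
      have h0 := hloc Z hZ hnear
      dsimp only at h0
      rw [hfx, ht', hu', ← EReal.coe_add] at h0
      exact h0
    calc (fx : EReal) + ((α * ns V / 2 : ℝ) : EReal)
        = (((fx + α * ns V / 2 : ℝ)) : EReal) := by rw [← EReal.coe_add]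
      _ ≤ (((fx + (t - r/2*u) + (u - 2*(α*t) + α^2*ns V)/(2*α) : ℝ)) : EReal) := by
          rw [EReal.coe_le_coe_iff]
          have hexp : (u - 2*(α*t) + α^2*ns V)/(2*α) = u/(2*α) - t + α * ns V / 2 := by
            field_simp
          rw [hexp]
          have hru : r/2 * u ≤ u/(2*α) := by
            have hx : r/2 ≤ 1/(2*α) := by
              rw [div_le_div_iff₀ (by norm_num) (by positivity)]
              nlinarith
            calc r/2*u ≤ 1/(2*α)*u := by nlinarith
              _ = u/(2*α) := by ring
          linarith
      _ = (((fx + (t - r/2*u) : ℝ)) : EReal) + (((u - 2*(α*t) + α^2*ns V)/(2*α) : ℝ) : EReal) := by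
          rw [← EReal.coe_add]
      _ ≤ f (eigd Z) + (((u - 2*(α*t) + α^2*ns V)/(2*α) : ℝ) : EReal) :=
          add_le_add_left h _
  · -- far case
    push_neg at hnear
    have hεu : ε^2 < u := by
      have h1 : ε < Real.sqrt u := by rw [← hu']; exact hnear
      nlinarith [Real.sq_sqrt hu0, Real.sqrt_nonneg u, hε]
    have hns : ε^2/2 - α^2 * ns V ≤ ns ((Z - X) - α • V) := by
      have := ns_sub_half (Z - X) (α • V)
      rw [ns_smul] at this
      linarith
    have hq2' := hq2''
    have hfZ : (c : EReal) ≤ f (eigd Z) := hc _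
    have hreal : fx + α * ns V / 2 ≤ c + (u - 2*(α*t) + α^2*ns V)/(2*α) := by
      rw [hq2']
      have h2 : ε^2/(4*α) - α * ns V / 2 ≤ ns ((Z - X) - α • V) / (2*α) := by
        have h2a : (ε^2/2 - α^2*ns V)/(2*α) ≤ ns ((Z - X) - α • V)/(2*α) := by
          gcongr
        have heq : (ε^2/2 - α^2*ns V)/(2*α) = ε^2/(4*α) - α*ns V/2 := by
          field_simp; ring
        linarith
      have hαle1 : α ≤ 1 := by nlinarith [ns_nonneg V]
      have h3 : fx - c + α * ns V ≤ ε^2/(4*α) := by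
        have hKb : K ≤ ε^2/(4*α) := by
          rw [le_div_iff₀ (by positivity)]
          nlinarith
        nlinarith [mul_nonneg (sub_nonneg.mpr hαle1) (ns_nonneg V)]
      linarith
    calc (fx : EReal) + ((α * ns V / 2 : ℝ) : EReal)
        = (((fx + α * ns V / 2 : ℝ)) : EReal) := by rw [← EReal.coe_add]
      _ ≤ (((c + (u - 2*(α*t) + α^2*ns V)/(2*α) : ℝ)) : EReal) := by
          rw [EReal.coe_le_coe_iff]; exact hreal
      _ = ((c:ℝ) : EReal) + (((u - 2*(α*t) + α^2*ns V)/(2*α) : ℝ) : EReal) := by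
          rw [← EReal.coe_add]
      _ ≤ f (eigd Z) + (((u - 2*(α*t) + α^2*ns V)/(2*α) : ℝ) : EReal) :=
          add_le_add_left hfZ _



theorem part2 (f : (Fin n → ℝ) → EReal)
    (X : Matrix (Fin n) (Fin n) ℝ) (hX : X.IsHermitian)
    (fx : ℝ) (hfx : f (eigd X) = (fx : EReal))
    (V : Matrix (Fin n) (Fin n) ℝ) (hVsymm : V.IsHermitian)
    (α : ℝ) (hα : 0 < α) (hmem : X ∈ proxS f α (X + α • V)) :
    X * V = V * X := by
  letI : SeminormedRing (Matrix (Fin n) (Fin n) ℝ) := Matrix.linftyOpSemiNormedRing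
  letI : NormedRing (Matrix (Fin n) (Fin n) ℝ) := Matrix.linftyOpNormedRing
  letI : NormedAlgebra ℝ (Matrix (Fin n) (Fin n) ℝ) := Matrix.linftyOpNormedAlgebra
  letI : CompleteSpace (Matrix (Fin n) (Fin n) ℝ) :=
    FiniteDimensional.complete ℝ _
  set S : Matrix (Fin n) (Fin n) ℝ := X * V - V * X with hSdef
  have hSskew : Sᵀ = -S := by
    rw [hSdef, Matrix.transpose_sub, Matrix.transpose_mul, Matrix.transpose_mul,
      herm_tr hX, herm_tr hVsymm]
    abel
  set E : ℝ → Matrix (Fin n) (Fin n) ℝ := fun t => NormedSpace.exp (t • S) with hEdef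
  have hEt : ∀ t : ℝ, (E t)ᵀ = NormedSpace.exp (-(t • S)) := by
    intro t
    rw [hEdef, ← Matrix.exp_transpose, Matrix.transpose_smul, hSskew, smul_neg]
  have hinv : ∀ t : ℝ, E t * (E t)ᵀ = 1 := by
    intro t
    rw [hEt, hEdef, ← Matrix.exp_add_of_commute _ _ (Commute.refl (t • S)).neg_right,
      add_neg_cancel, NormedSpace.exp_zero]
  set Y : ℝ → Matrix (Fin n) (Fin n) ℝ := fun t => E t * X * (E t)ᵀ with hYdef
  have hYherm : ∀ t : ℝ, (Y t).IsHermitian := by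
    intro t
    apply herm_of_tr
    rw [hYdef]
    simp only []
    rw [Matrix.transpose_mul, Matrix.transpose_mul, Matrix.transpose_transpose,
      herm_tr hX, ← Matrix.mul_assoc]
  have heig : ∀ t : ℝ, eigd (Y t) = eigd X := fun t =>
    eigd_eq_of_charpoly (hYherm t) hX (charpoly_conj (E t) ((E t)ᵀ) X (hinv t))
  -- φ and its nonnegativity
  set φ : ℝ → ℝ := fun t => ns (Y t - X) - 2*α*((V * (Y t - X)).trace) with hφdef
  have hq1 : ((X - (X + α • V))ᵀ * (X - (X + α • V))).trace = α^2 * ns V := by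
    have h1 : X - (X + α • V) = -(α • V) := by abel
    have h2 : ((X - (X + α • V))ᵀ * (X - (X + α • V))).trace = ns (X - (X + α • V)) := rfl
    rw [h2, h1, ns_neg, ns_smul]
  have hφ0 : ∀ t : ℝ, 0 ≤ φ t := by
    intro t
    have h := hmem.2 (Y t) (hYherm t)
    rw [heig t, hfx, hq1] at h
    have hsplit : Y t - (X + α • V) = (Y t - X) - α • V := by abel
    have hq2 : ((Y t - (X + α • V))ᵀ * (Y t - (X + α • V))).trace
        = ns (Y t - X) - 2*(α * ((V * (Y t - X)).trace)) + α^2 * ns V := by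
      have h2 : ((Y t - (X + α • V))ᵀ * (Y t - (X + α • V))).trace
          = ns (Y t - (X + α • V)) := rfl
      rw [h2, hsplit, ns_sub, ns_smul]
      congr 2
      rw [herm_tr ((hYherm t).sub hX), Matrix.mul_smul, Matrix.trace_smul,
        Matrix.trace_mul_comm]
      rfl
    rw [hq2, ← EReal.coe_add, ← EReal.coe_add, EReal.coe_le_coe_iff] at h
    have h2α : 0 < 2*α := by positivity
    have h4 : α^2*ns V * (2*α) ≤ (ns (Y t - X) - 2*(α * ((V * (Y t - X)).trace)) + α^2*ns V) * (2*α) := by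
      apply (div_le_div_iff₀ h2α h2α).mp
      linarith
    show 0 ≤ ns (Y t - X) - 2*α*((V * (Y t - X)).trace)
    nlinarith
  have hφat0 : φ 0 = 0 := by
    have hE0 : E 0 = 1 := by rw [hEdef]; simp [NormedSpace.exp_zero]
    have hY0 : Y 0 = X := by rw [hYdef]; simp [hE0]
    rw [hφdef]; simp [hY0, ns_zero]
  -- derivative
  have hE0 : E 0 = 1 := by rw [hEdef]; simp [NormedSpace.exp_zero]
  have hY0 : Y 0 = X := by rw [hYdef]; simp [hE0]
  have hdE : HasDerivAt E S 0 := by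
    have := hasDerivAt_exp_smul_const (𝕂 := ℝ) S (0 : ℝ)
    simp at this
    exact this
  -- continuous linear maps
  have hfd : FiniteDimensional ℝ (Matrix (Fin n) (Fin n) ℝ) := by infer_instance
  set Ltr : Matrix (Fin n) (Fin n) ℝ →ₗ[ℝ] Matrix (Fin n) (Fin n) ℝ :=
    (Matrix.transposeLinearEquiv (Fin n) (Fin n) ℝ ℝ).toLinearMap with hLtrdef
  have hLtr : ∀ A, Ltr A = Aᵀ := fun A => rfl
  set Lv : Matrix (Fin n) (Fin n) ℝ →ₗ[ℝ] ℝ :=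
    (Matrix.traceLinearMap (Fin n) ℝ ℝ).comp (LinearMap.mulLeft ℝ V) with hLvdef
  have hLv : ∀ A, Lv A = (V * A).trace := fun A => rfl
  set W : Matrix (Fin n) (Fin n) ℝ := S * X - X * S with hWdef
  have hdEt : HasDerivAt (fun t => (E t)ᵀ) Sᵀ 0 := by
    have hc := (LinearMap.toContinuousLinearMap Ltr).hasFDerivAt (x := E 0)
    have := hc.comp_hasDerivAt 0 hdE
    simp [hLtr] at this
    exact this
  have hdY : HasDerivAt (fun t => Y t - X) W 0 := by
    have h1 : HasDerivAt (fun t => E t * X) (S * X) 0 := hdE.mul_const X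
    have h2 := h1.mul hdEt
    have h3 := h2.sub_const X
    have he : S * X * (E 0)ᵀ + E 0 * X * Sᵀ = W := by
      rw [hE0, hSskew, hWdef]
      simp [Matrix.mul_neg]
      abel
    rw [← he]
    exact h3
  have hdYt : HasDerivAt (fun t => (Y t - X)ᵀ) Wᵀ 0 := by
    have hc := (LinearMap.toContinuousLinearMap Ltr).hasFDerivAt (x := Y 0 - X)
    have := hc.comp_hasDerivAt 0 hdY
    simp [hLtr] at this
    exact this
  have hdns : HasDerivAt (fun t => ns (Y t - X)) 0 0 := by
    have h2 := hdYt.mul hdY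
    have hzero : Y 0 - X = 0 := by rw [hY0]; simp
    rw [hzero] at h2
    have h2' : HasDerivAt (fun t => (Y t - X)ᵀ * (Y t - X)) 0 0 := by
      simp at h2
      exact h2
    have hc := (LinearMap.toContinuousLinearMap
      (Matrix.traceLinearMap (Fin n) ℝ ℝ)).hasFDerivAt (x := (Y 0 - X)ᵀ * (Y 0 - X))
    have h4 := hc.comp_hasDerivAt 0 h2'
    exact h4.congr_deriv (Matrix.trace_zero (Fin n) ℝ)
  have hdtr : HasDerivAt (fun t => (V * (Y t - X)).trace) ((V * W).trace) 0 := by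
    have hc := (LinearMap.toContinuousLinearMap Lv).hasFDerivAt (x := Y 0 - X)
    have := hc.comp_hasDerivAt 0 hdY
    simp [hLv] at this
    exact this
  have hdφ : HasDerivAt φ (0 - 2*α*((V * W).trace)) 0 := by
    have := hdns.sub (hdtr.const_mul (2*α))
    exact this
  have hmin : IsLocalMin φ 0 := by
    apply Filter.Eventually.of_forall
    intro t
    rw [hφat0]
    exact hφ0 t
  have hzero := hmin.hasDerivAt_eq_zero hdφ
  have htrW : (V * W).trace = 0 := by
    have h2 : (2*α) * (V * W).trace = 0 := by linarith [hzero]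
    exact (mul_eq_zero.mp h2).resolve_left (by positivity)
  -- compute (V * W).trace = - ns S
  have htrVW : (V * W).trace = - ns S := by
    have h1 : V * W = V * (S * X) - V * (X * S) := by rw [hWdef, Matrix.mul_sub]
    rw [h1, Matrix.trace_sub]
    rw [show V * (S * X) = (V * S) * X from by rw [Matrix.mul_assoc],
      Matrix.trace_mul_comm (V * S) X,
      show X * (V * S) = (X * V) * S from by rw [Matrix.mul_assoc],
      show V * (X * S) = (V * X) * S from by rw [Matrix.mul_assoc],
      ← Matrix.trace_sub, ← Matrix.sub_mul, ← hSdef]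
    have hSS : S * S = -(Sᵀ * S) := by rw [hSskew]; simp [Matrix.neg_mul]
    rw [hSS, Matrix.trace_neg]
    rfl
  have hnsS : ns S = 0 := by rw [htrVW] at htrW; linarith
  have hS0 : S = 0 := eq_zero_of_ns S hnsS
  have := sub_eq_zero.mp (hSdef ▸ hS0)
  exact this



end Stmt14

/-- If `V` is a proximal subgradient of `f∘λ` at `X` (for `f` lsc, symmetric,
lower-bounded, with `f(λ(X))` finite), then `X ∈ P_α(f∘λ)(X + αV)` for some `α > 0`,
and consequently `X` and `V` commute. -/
theorem statement14 {n : ℕ} (f : (Fin n → ℝ) → EReal)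
    (hlsc : LowerSemicontinuous f) (hsym : IsSymmFn f)
    (hbdd : ∃ c : ℝ, ∀ y, (c : EReal) ≤ f y)
    (X : Matrix (Fin n) (Fin n) ℝ) (hX : X.IsHermitian)
    (fx : ℝ) (hfx : f (eigd X) = (fx : EReal))
    (V : Matrix (Fin n) (Fin n) ℝ) (hVsymm : V.IsHermitian)
    (hV : ProxSubM (fun M => f (eigd M)) X V) :
    (∃ α : ℝ, 0 < α ∧ X ∈ proxS f α (X + α • V)) ∧ X * V = V * X := by
  obtain ⟨α, hα, _hb, hmem⟩ := Stmt14.part1 f hbdd X hX fx hfx V hVsymm hV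
  exact ⟨⟨α, hα, hmem⟩, Stmt14.part2 f X hX fx hfx V hVsymm α hα hmem⟩
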